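/- Let R be essentially of finite type over an F-finite field, (M, κ) a Cartier module, f ∈ R, and λ an F-jumping number of the test module filtration of M along f. The Cartier structure on Gr^λ M given by κ^e f^{a_e(λ)} (with a_e(λ) ≥ ⌈λ(p^e−1)⌉) is non-nilpotent if and only if a_e(λ) = λ(p^e−1) and λ(p^e−1) ∈ ℤ. In particular, if p divides the denominator of λ, all these Cartier structures are nilpotent. -/
import Mathlib


open Function

variable {R : Type*} [CommRing R] {M : Type*} [AddCommGroup M] [Module R M]

/-- The submodule `κ^e (f^n • N)`. -/
def opApply (κ : M →+ M) (f : R) (e n : ℕ) (N : Submodule R M) : Submodule R M :=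
  Submodule.span R ((⇑κ)^[e] '' ((fun m => f ^ n • m) '' (N : Set M)))

/-- If `p` divides the denominator of `lam` then `lam * (p^e - 1)` is not an integer. -/
lemma den_dvd_not_int (p : ℕ) (hp : p.Prime) (e : ℕ) (he : 1 ≤ e) (lam : ℚ)
    (hpden : p ∣ lam.den) (k : ℤ) (hk : lam * ((p : ℚ) ^ e - 1) = k) : False := by
  have hden : (lam.den : ℚ) ≠ 0 := Nat.cast_ne_zero.mpr lam.den_nz
  have h0 : lam * (lam.den : ℚ) = (lam.num : ℚ) := Rat.mul_den_eq_num lam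
  have h1 : (lam.num : ℚ) * ((p:ℚ)^e - 1) = (k:ℚ) * lam.den := by
    rw [← h0]
    rw [mul_comm lam (lam.den : ℚ), mul_assoc, hk]
    ring
  have h2 : lam.num * ((p:ℤ)^e - 1) = k * (lam.den : ℤ) := by exact_mod_cast h1
  have hpz : (p:ℤ) ∣ lam.num * ((p:ℤ)^e - 1) := by
    rw [h2]
    exact Dvd.dvd.mul_left (Int.natCast_dvd_natCast.mpr hpden) k
  have hprime : Prime (p:ℤ) := Nat.prime_iff_prime_int.mp hp
  rcases hprime.dvd_mul.mp hpz with hnum | hpow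
  · have hnat : p ∣ lam.num.natAbs := by
      have := Int.natAbs_dvd_natAbs.mpr hnum
      simpa using this
    have : p ∣ 1 := by
      have hcop := lam.reduced
      exact hcop ▸ Nat.dvd_gcd hnat hpden
    have h5 := Nat.le_of_dvd one_pos this
    have := hp.two_le
    omega
  · have hpe : (p:ℤ) ∣ (p:ℤ)^e := dvd_pow_self _ (by omega : e ≠ 0)
    have hone : (p:ℤ) ∣ 1 := by
      have := dvd_sub hpe hpow
      simpa using this
    have := Int.le_of_dvd one_pos hone
    have := hp.two_le
    omega

/-- Theorem 2.4: for an `F`-jumping number `λ`, the Cartier structure `κ^e f^{a}`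
(with `a ≥ ⌈λ(p^e−1)⌉`) on `Gr^λ M = τ(M, f^{λ−ε})/τ(M, f^λ)` is non-nilpotent iff
`a = λ(p^e−1)` and `λ(p^e−1) ∈ ℤ`. In particular, if `p` divides the denominator of
`λ`, all these Cartier structures are nilpotent. Nilpotence means some iterate of
`κ^e f^a` maps `τ(M, f^{λ−ε})` into `τ(M, f^λ)`. -/
theorem graded_cartier_nonnilpotent_iff (p : ℕ) (hp : p.Prime) [CharP R p]
    (κ : M →+ M) (hκ : ∀ (r : R) (m : M), κ (r ^ p • m) = r • κ m)
    (f : R) (τ : ℚ → Submodule R M)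
    (hdec : ∀ μ ν : ℚ, 0 ≤ μ → μ ≤ ν → τ ν ≤ τ μ)
    (hBS : ∀ μ : ℚ, 0 ≤ μ → ∀ e n : ℕ,
      opApply κ f e n (τ μ) = τ ((μ + n) / (p : ℚ) ^ e))
    (lam : ℚ) (hlam : 0 ≤ lam)
    (ε : ℚ) (hε : 0 < ε) (hεlam : ε ≤ lam)
    (hsmall : ∀ ε' : ℚ, 0 < ε' → ε' ≤ ε → τ (lam - ε') = τ (lam - ε))
    (hjump : τ lam ≠ τ (lam - ε))
    (e : ℕ) (he : 1 ≤ e) (a : ℕ) (ha : ⌈lam * ((p : ℚ) ^ e - 1)⌉ ≤ (a : ℤ)) :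
    ((¬ ∃ N : ℕ, (opApply κ f e a)^[N] (τ (lam - ε)) ≤ τ lam)
        ↔ ((a : ℚ) = lam * ((p : ℚ) ^ e - 1)
            ∧ ∃ k : ℤ, lam * ((p : ℚ) ^ e - 1) = k))
    ∧ (p ∣ lam.den → ∃ N : ℕ, (opApply κ f e a)^[N] (τ (lam - ε)) ≤ τ lam) := by
  have hp2 : (2:ℚ) ≤ (p:ℚ) := by exact_mod_cast hp.two_le
  set q : ℚ := (p:ℚ)^e with hqdef
  have hq1 : 1 < q := by
    calc (1:ℚ) < 2 := by norm_num
    _ ≤ (p:ℚ)^1 := by simpa using hp2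
    _ ≤ (p:ℚ)^e := pow_le_pow_right₀ (by linarith) he
  have hq0 : 0 < q - 1 := by linarith
  have hqpos : 0 < q := by linarith
  have halam : lam * (q-1) ≤ (a:ℚ) := le_trans (Int.le_ceil _) (by exact_mod_cast ha)
  set c : ℚ := a / (q-1) with hcdef
  have hc : c * (q-1) = a := div_mul_cancel₀ _ hq0.ne'
  have hcl : lam ≤ c := by rw [hcdef, le_div_iff₀ hq0]; exact halam
  set d : ℚ := c - (lam - ε) with hddef
  have hd : 0 < d := by rw [hddef]; linarith
  have key : ∀ N : ℕ, 0 ≤ c - d / q ^ N ∧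
      (opApply κ f e a)^[N] (τ (lam - ε)) = τ (c - d / q ^ N) := by
    intro N
    induction N with
    | zero =>
      have h0 : c - d / q ^ 0 = lam - ε := by rw [hddef]; ring
      rw [h0]; exact ⟨by linarith, rfl⟩
    | succ N ih =>
      have hqN : 0 < q ^ N := pow_pos hqpos N
      have hqN1 : 0 < q ^ (N+1) := pow_pos hqpos (N+1)
      have hmono : d / q ^ (N+1) ≤ d / q ^ N := by
        apply div_le_div_of_nonneg_left hd.le hqN
        exact pow_le_pow_right₀ hq1.le (Nat.le_succ N)
      have hnn : 0 ≤ c - d / q ^ (N+1) := by linarith [ih.1]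
      refine ⟨hnn, ?_⟩
      rw [Function.iterate_succ_apply', ih.2, hBS _ ih.1 e a, ← hqdef]
      congr 1
      rw [← hc]
      field_simp
      ring
  have nilp_of_lt : lam * (q-1) < (a:ℚ) →
      ∃ N : ℕ, (opApply κ f e a)^[N] (τ (lam - ε)) ≤ τ lam := by
    intro hlt
    have hclam : lam < c := by rw [hcdef, lt_div_iff₀ hq0]; exact hlt
    obtain ⟨N, hN⟩ := pow_unbounded_of_one_lt (d / (c - lam)) hq1
    refine ⟨N, ?_⟩
    rw [(key N).2]
    apply hdec lam _ hlam
    have hqN : 0 < q ^ N := pow_pos hqpos N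
    have h2 : d < (c - lam) * q ^ N := by
      have h3 := (div_lt_iff₀ (by linarith : (0:ℚ) < c - lam)).mp hN
      linarith [mul_comm (q ^ N) (c - lam)]
    have h4 : d / q ^ N ≤ c - lam := by
      rw [div_le_iff₀ hqN]; linarith
    linarith
  have nonnilp_of_eq : (a:ℚ) = lam * (q-1) →
      ¬ ∃ N : ℕ, (opApply κ f e a)^[N] (τ (lam - ε)) ≤ τ lam := by
    intro heq
    rintro ⟨N, hN⟩
    have hce : c = lam := by rw [hcdef, heq, mul_div_cancel_right₀ _ hq0.ne']
    have hde : d = ε := by rw [hddef, hce]; ring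
    have hqN : 0 < q ^ N := pow_pos hqpos N
    have hqN1 : (1:ℚ) ≤ q ^ N := one_le_pow₀ hq1.le
    have hx : c - d / q ^ N = lam - ε / q ^ N := by rw [hce, hde]
    have hττ : τ (c - d / q ^ N) = τ (lam - ε) := by
      rw [hx]
      exact hsmall (ε / q ^ N) (div_pos hε hqN) (div_le_self hε.le hqN1)
    rw [(key N).2, hττ] at hN
    have hback : τ lam ≤ τ (lam - ε) := hdec (lam - ε) lam (by linarith) (by linarith)
    exact hjump (le_antisymm hback hN)
  constructor
  · constructor
    · intro hnn
      rcases eq_or_lt_of_le halam with hEq | hlt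
      · exact ⟨hEq.symm, ⟨(a:ℤ), by exact_mod_cast hEq⟩⟩
      · exact absurd (nilp_of_lt hlt) hnn
    · rintro ⟨hEq, -⟩
      exact nonnilp_of_eq hEq
  · intro hpden
    rcases eq_or_lt_of_le halam with hEq | hlt
    · exact absurd hEq (fun h => den_dvd_not_int p hp e he lam hpden (a:ℤ)
        (by rw [← hqdef]; exact_mod_cast h))
    · exact nilp_of_lt hlt
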